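/- Let κ̃ > 1/π. Then: (i) there exists a unique α̃₀ ∈ (0, 2κ̃] such that ∫₀^{π/2} √(α̃₀² + sin²y) dy = κ̃π; (ii) the function h(x) := ( ∫₀^{π/2} √(x² + sin²y) dy − κ̃π ) / ( 4 ∫₀^{π/2} dy/√(x² + sin²y) ) − x²/8, defined for x > 0, attains its global minimum on (0,∞) at the unique point x = α̃₀, and h(α̃₀) = −α̃₀²/8. -/

import Mathlib

open MeasureTheory Real Set Filter Topology

noncomputable section

/-- The auxiliary function
`h(x) = (∫₀^{π/2} √(x² + sin²y) dy − κ̃π) / (4 ∫₀^{π/2} dy/√(x² + sin²y)) − x²/8`. -/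
def hfun (κt x : ℝ) : ℝ :=
  ((∫ y in (0:ℝ)..(π / 2), Real.sqrt (x ^ 2 + Real.sin y ^ 2)) - κt * π) /
      (4 * ∫ y in (0:ℝ)..(π / 2), 1 / Real.sqrt (x ^ 2 + Real.sin y ^ 2)) -
    x ^ 2 / 8

namespace Stmt10Aux

/-- `F x = ∫₀^{π/2} √(x²+sin² y) dy`. -/
def F (x : ℝ) : ℝ := ∫ y in (0:ℝ)..(π / 2), Real.sqrt (x ^ 2 + Real.sin y ^ 2)

/-- `G x = ∫₀^{π/2} 1/√(x²+sin² y) dy`. -/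
def G (x : ℝ) : ℝ := ∫ y in (0:ℝ)..(π / 2), 1 / Real.sqrt (x ^ 2 + Real.sin y ^ 2)

lemma contI (x : ℝ) : Continuous fun y : ℝ => Real.sqrt (x ^ 2 + Real.sin y ^ 2) :=
  (continuous_const.add (Real.continuous_sin.pow 2)).sqrt

lemma sqrt_pos_of_pos {x : ℝ} (hx : 0 < x) (y : ℝ) :
    0 < Real.sqrt (x ^ 2 + Real.sin y ^ 2) := by
  apply Real.sqrt_pos.2; positivity

lemma contJ {x : ℝ} (hx : 0 < x) :
    Continuous fun y : ℝ => 1 / Real.sqrt (x ^ 2 + Real.sin y ^ 2) :=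
  continuous_const.div (contI x) (fun y => (sqrt_pos_of_pos hx y).ne')

lemma intInt {f : ℝ → ℝ} (hf : Continuous f) :
    IntervalIntegrable f volume 0 (π/2) := hf.intervalIntegrable 0 (π/2)

lemma contF : Continuous F := by
  have : Continuous (Function.uncurry fun x y : ℝ => Real.sqrt (x ^ 2 + Real.sin y ^ 2)) := by
    apply Continuous.sqrt
    exact ((continuous_fst.pow 2).add ((Real.continuous_sin.comp continuous_snd).pow 2))
  exact intervalIntegral.continuous_parametric_intervalIntegral_of_continuous' (μ := volume) this 0 (π/2)

lemma G_pos {x : ℝ} (hx : 0 < x) : 0 < G x := by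
  apply intervalIntegral.intervalIntegral_pos_of_pos_on
    (intInt (contJ hx))
  · intro y _
    exact div_pos one_pos (sqrt_pos_of_pos hx y)
  · positivity

lemma F_strictMono : StrictMonoOn F (Ici 0) := by
  intro a ha b hb hab
  have key : 0 < ∫ y in (0:ℝ)..(π/2),
      (Real.sqrt (b ^ 2 + Real.sin y ^ 2) - Real.sqrt (a ^ 2 + Real.sin y ^ 2)) := by
    apply intervalIntegral.intervalIntegral_pos_of_pos_on
      (intInt ((contI b).sub (contI a)))
    · intro y _
      have ha' : (0:ℝ) ≤ a := ha
      have : a ^ 2 < b ^ 2 := by nlinarith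
      have := Real.sqrt_lt_sqrt (by positivity) (by linarith : a ^ 2 + Real.sin y ^ 2 < b ^ 2 + Real.sin y ^ 2)
      simp only [Pi.sub_apply]; linarith
    · positivity
  have := intervalIntegral.integral_sub (intInt (contI b))
    (intInt (contI a))
  unfold F
  rw [this] at key
  linarith

lemma F_two_kt {κt : ℝ} (hκ : 0 < κt) : κt * π ≤ F (2 * κt) := by
  have h1 : ∫ y in (0:ℝ)..(π/2), (2 * κt) = κt * π := by
    simp [intervalIntegral.integral_const]
    ring
  rw [← h1]
  apply intervalIntegral.integral_mono_on (by positivity)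
    intervalIntegrable_const (intInt (contI _))
  intro y _
  have : 2 * κt = Real.sqrt ((2*κt)^2) := by
    rw [Real.sqrt_sq (by positivity)]
  rw [this]
  apply Real.sqrt_le_sqrt
  nlinarith [sq_nonneg (Real.sin y)]

lemma F_low {κt : ℝ} (hκt : 1 / π < κt) : F (κt - 1/π) < κt * π := by
  have hπ : (0:ℝ) < π := Real.pi_pos
  have hκπ : 1 < κt * π := by
    rw [div_lt_iff₀ hπ] at hκt; linarith [hκt]
  set x := κt - 1/π with hxdef
  have hx : 0 < x := by
    simp only [hxdef]; linarith [sub_pos.2 hκt]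
  have step : F x ≤ ∫ y in (0:ℝ)..(π/2), (x + Real.sin y) := by
    apply intervalIntegral.integral_mono_on (by positivity)
      (intInt (contI x))
      ((continuous_const.add Real.continuous_sin).intervalIntegrable 0 (π/2))
    intro y hy
    have hs : 0 ≤ Real.sin y := Real.sin_nonneg_of_nonneg_of_le_pi hy.1
      (by linarith [hy.2, hπ])
    have : x ^ 2 + Real.sin y ^ 2 ≤ (x + Real.sin y)^2 := by nlinarith
    calc Real.sqrt (x ^ 2 + Real.sin y ^ 2) ≤ Real.sqrt ((x + Real.sin y)^2) :=
          Real.sqrt_le_sqrt this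
      _ = x + Real.sin y := Real.sqrt_sq (by positivity)
  have hval : (∫ y in (0:ℝ)..(π/2), (x + Real.sin y)) = x * (π/2) + 1 := by
    rw [intervalIntegral.integral_add intervalIntegrable_const
      (intInt Real.continuous_sin)]
    rw [integral_sin]
    simp [intervalIntegral.integral_const]
    ring
  have h2 : x * (π/2) + 1 < κt * π := by
    have h3 : x * π = κt * π - 1 := by
      simp only [hxdef]; field_simp
    have h4 : x * (π/2) = (κt * π - 1)/2 := by
      rw [show x * (π/2) = x * π / 2 by ring, h3]
    rw [h4]; linarith
  linarith [step, hval.le, hval.ge, h2]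

/-- the key pointwise inequality -/
lemma pointwise_key {x α s : ℝ} (hx : 0 < x) (hα : 0 < α) (hne : x ≠ α) (hs : 0 ≤ s) :
    (x ^ 2 - α ^ 2) / (2 * Real.sqrt (x ^ 2 + s)) <
      Real.sqrt (x ^ 2 + s) - Real.sqrt (α ^ 2 + s) := by
  set A := Real.sqrt (x ^ 2 + s) with hA
  set B := Real.sqrt (α ^ 2 + s) with hB
  have hApos : 0 < A := Real.sqrt_pos.2 (by positivity)
  have hBpos : 0 < B := Real.sqrt_pos.2 (by positivity)
  have hA2 : A ^ 2 = x ^ 2 + s := Real.sq_sqrt (by positivity)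
  have hB2 : B ^ 2 = α ^ 2 + s := Real.sq_sqrt (by positivity)
  have hABne : A ≠ B := by
    intro h
    apply hne
    have : x ^ 2 = α ^ 2 := by
      have := hA2; rw [h, hB2] at this; linarith
    nlinarith
  rw [div_lt_iff₀ (by positivity)]
  have h1 : x ^ 2 - α ^ 2 = A ^ 2 - B ^ 2 := by rw [hA2, hB2]; ring
  rw [h1]
  have hne2 : A - B ≠ 0 := sub_ne_zero.2 hABne
  have hsq : 0 < (A - B)^2 := by positivity
  nlinarith

lemma hfun_eq (κt x : ℝ) : hfun κt x = (F x - κt * π) / (4 * G x) - x ^ 2 / 8 := rfl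

lemma main_ineq {κt α₀ : ℝ} (hα : 0 < α₀) (hF : F α₀ = κt * π) :
    ∀ x, 0 < x → x ≠ α₀ → hfun κt α₀ < hfun κt x := by
  intro x hx hne
  have hπ : (0:ℝ) < π := Real.pi_pos
  have hGx : 0 < G x := G_pos hx
  -- pointwise equality to pull out the constant
  have h2 : ∀ y : ℝ, (x ^ 2 - α₀ ^ 2) / (2 * Real.sqrt (x ^ 2 + Real.sin y ^ 2)) =
      (x ^ 2 - α₀ ^ 2) / 2 * (1 / Real.sqrt (x ^ 2 + Real.sin y ^ 2)) := by
    intro y; field_simp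
  have hi1 := intInt (contI x)
  have hi2 := intInt (contI α₀)
  have hcont3 : Continuous fun y : ℝ =>
      (x ^ 2 - α₀ ^ 2) / (2 * Real.sqrt (x ^ 2 + Real.sin y ^ 2)) :=
    continuous_const.div (continuous_const.mul (contI x))
      (fun y => by positivity)
  have hi3 := intInt hcont3
  have key : 0 < ∫ y in (0:ℝ)..(π/2),
      (Real.sqrt (x ^ 2 + Real.sin y ^ 2) - Real.sqrt (α₀ ^ 2 + Real.sin y ^ 2)
        - (x ^ 2 - α₀ ^ 2) / (2 * Real.sqrt (x ^ 2 + Real.sin y ^ 2))) := by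
    apply intervalIntegral.intervalIntegral_pos_of_pos_on
      (intInt (((contI x).sub (contI α₀)).sub hcont3))
    · intro y _
      have := pointwise_key hx hα hne (sq_nonneg (Real.sin y))
      simp only [Pi.sub_apply]; linarith
    · positivity
  have hsplit : (∫ y in (0:ℝ)..(π/2),
      (Real.sqrt (x ^ 2 + Real.sin y ^ 2) - Real.sqrt (α₀ ^ 2 + Real.sin y ^ 2)
        - (x ^ 2 - α₀ ^ 2) / (2 * Real.sqrt (x ^ 2 + Real.sin y ^ 2))))
      = F x - F α₀ - (x ^ 2 - α₀ ^ 2) / 2 * G x := by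
    rw [intervalIntegral.integral_sub (hi1.sub hi2) hi3,
        intervalIntegral.integral_sub hi1 hi2]
    congr 1
    simp_rw [h2]
    rw [intervalIntegral.integral_const_mul]
    rfl
  rw [hsplit, hF] at key
  -- now convert to the h inequality
  rw [hfun_eq, hfun_eq, hF, sub_self, zero_div, zero_sub]
  have hstep : (x ^ 2 - α₀ ^ 2) / 8 < (F x - κt * π) / (4 * G x) := by
    rw [lt_div_iff₀ (by positivity : (0:ℝ) < 4 * G x)]
    calc (x ^ 2 - α₀ ^ 2) / 8 * (4 * G x) = (x ^ 2 - α₀ ^ 2) / 2 * G x := by ring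
      _ < F x - κt * π := by linarith
  linarith

end Stmt10Aux

open Stmt10Aux in
/-- Let `κ̃ > 1/π`.  Then (i) there is a unique `α̃₀ ∈ (0, 2κ̃]` with
`∫₀^{π/2} √(α̃₀² + sin²y) dy = κ̃π`; (ii) the function `h` attains its global minimum on
`(0,∞)` at the unique point `x = α̃₀`, and `h(α̃₀) = −α̃₀²/8`. -/
theorem stmt10 (κt : ℝ) (hκt : 1 / π < κt) :
    ∃ α₀ : ℝ,
      (α₀ ∈ Ioc (0:ℝ) (2 * κt) ∧
        (∫ y in (0:ℝ)..(π / 2), Real.sqrt (α₀ ^ 2 + Real.sin y ^ 2)) = κt * π) ∧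
      (∀ α ∈ Ioc (0:ℝ) (2 * κt),
        (∫ y in (0:ℝ)..(π / 2), Real.sqrt (α ^ 2 + Real.sin y ^ 2)) = κt * π →
          α = α₀) ∧
      (∀ x > 0, hfun κt α₀ ≤ hfun κt x) ∧
      (∀ x > 0, hfun κt x = hfun κt α₀ → x = α₀) ∧
      hfun κt α₀ = -α₀ ^ 2 / 8 := by
  have hπ : (0:ℝ) < π := Real.pi_pos
  have hκ : (0:ℝ) < κt := lt_trans (by positivity) hκt
  set xlow := κt - 1 / π with hxl
  have hxlow : 0 < xlow := sub_pos.2 hκt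
  have hxlow2 : xlow ≤ 2 * κt := by
    have : (0:ℝ) < 1 / π := by positivity
    simp only [hxl]; linarith
  obtain ⟨α₀, hmem, hFα⟩ : ∃ α₀ ∈ Icc xlow (2 * κt), F α₀ = κt * π := by
    have h := intermediate_value_Icc hxlow2 (contF.continuousOn)
    have : κt * π ∈ Icc (F xlow) (F (2 * κt)) := ⟨(F_low hκt).le, F_two_kt hκ⟩
    obtain ⟨α₀, hα₀, hFα⟩ := h this
    exact ⟨α₀, hα₀, hFα⟩
  have hα₀pos : 0 < α₀ := lt_of_lt_of_le hxlow hmem.1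
  have hα₀Ioc : α₀ ∈ Ioc (0:ℝ) (2 * κt) := ⟨hα₀pos, hmem.2⟩
  have hval : hfun κt α₀ = -α₀ ^ 2 / 8 := by
    rw [hfun_eq, hFα, sub_self, zero_div, zero_sub]; ring
  refine ⟨α₀, ⟨hα₀Ioc, hFα⟩, ?_, ?_, ?_, hval⟩
  · intro α hα hFeq
    exact F_strictMono.injOn (le_of_lt hα.1) (le_of_lt hα₀pos) (hFeq.trans hFα.symm)
  · intro x hx
    rcases eq_or_ne x α₀ with rfl | hne
    · exact le_refl _
    · exact (main_ineq hα₀pos hFα x hx hne).le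
  · intro x hx hfeq
    by_contra hne
    exact absurd hfeq (main_ineq hα₀pos hFα x hx hne).ne'
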